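/- Let F = { x ∈ ℝ^{d×d} : xᵀ𝟙 = x𝟙 }. The orthogonal complement of F in ℝ^{d×d} (with respect to the Frobenius inner product) equals { λ𝟙ᵀ − 𝟙λᵀ : λ ∈ ℝ^d }, a subspace of dimension d−1. -/

import Mathlib

open Finset
open scoped RealInnerProductSpace

/-- The subspace of `ℝ^{d×d}` (as a Euclidean space, i.e. with the Frobenius inner product)
consisting of matrices whose row sums equal their column sums coordinatewise. -/
def rcSpace (d : ℕ) : Submodule ℝ (EuclideanSpace ℝ (Fin d × Fin d)) where
  carrier := { x | ∀ r, ∑ s, x (r, s) = ∑ s, x (s, r) }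
  add_mem' := by
    intro a b ha hb r
    simp [Finset.sum_add_distrib, ha r, hb r]
  zero_mem' := by intro r; simp
  smul_mem' := by
    intro t a ha r
    simp [← Finset.mul_sum, ha r]

/-- The linear map `λ ↦ λ𝟙ᵀ − 𝟙λᵀ`. -/
def Lmap (d : ℕ) : (Fin d → ℝ) →ₗ[ℝ] EuclideanSpace ℝ (Fin d × Fin d) where
  toFun l := WithLp.toLp 2 (fun p : Fin d × Fin d => l p.1 - l p.2)
  map_add' a b := by ext p; simp only [PiLp.toLp_apply, PiLp.add_apply, Pi.add_apply]; ring
  map_smul' t a := by ext p; simp [mul_sub]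

lemma inner_Lmap (d : ℕ) (l : Fin d → ℝ) (x : EuclideanSpace ℝ (Fin d × Fin d)) :
    ⟪(Lmap d l), x⟫ = ∑ r, l r * ((∑ s, x (r, s)) - ∑ s, x (s, r)) := by
  simp only [PiLp.inner_apply, RCLike.inner_apply, conj_trivial]
  rw [Fintype.sum_prod_type]
  simp only [Lmap, LinearMap.coe_mk, AddHom.coe_mk, PiLp.toLp_apply, sub_mul, mul_sub, Finset.mul_sum,
    Finset.sum_sub_distrib]
  simp only [mul_comm (x.ofLp _)]
  congr 1
  all_goals rw [Finset.sum_comm]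

lemma rc_eq_orth (d : ℕ) : rcSpace d = (LinearMap.range (Lmap d))ᗮ := by
  ext x
  rw [Submodule.mem_orthogonal]
  constructor
  · rintro hx u ⟨l, rfl⟩
    rw [inner_Lmap]
    exact Finset.sum_eq_zero fun r _ => by rw [hx r, sub_self, mul_zero]
  · intro hx r
    have := hx (Lmap d (Pi.single r 1)) ⟨_, rfl⟩
    rw [inner_Lmap] at this
    simp only [Pi.single_apply, ite_mul, one_mul, zero_mul,
      Finset.sum_ite_eq, Finset.sum_ite_eq', Finset.mem_univ, if_true] at this
    linarith

lemma ker_Lmap (d : ℕ) (hd : 1 ≤ d) :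
    LinearMap.ker (Lmap d) = Submodule.span ℝ {(fun _ => (1:ℝ) : Fin d → ℝ)} := by
  ext l
  rw [LinearMap.mem_ker, Submodule.mem_span_singleton]
  constructor
  · intro h
    refine ⟨l ⟨0, hd⟩, funext fun i => ?_⟩
    have := congrArg (fun z => z (i, ⟨0, hd⟩)) h
    simp only [Lmap, LinearMap.coe_mk, AddHom.coe_mk] at this
    have hz : l i - l ⟨0, hd⟩ = 0 := this
    simp only [Pi.smul_apply, smul_eq_mul, mul_one]
    linarith
  · rintro ⟨a, rfl⟩
    ext p
    simp [Lmap]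

/-- The orthogonal complement of `F = {x : xᵀ𝟙 = x𝟙}` in `ℝ^{d×d}` with the Frobenius
inner product equals `{ λ𝟙ᵀ − 𝟙λᵀ : λ ∈ ℝ^d }`, the antisymmetric matrices with entries
`λ_r − λ_s`, a subspace of dimension `d − 1`. -/
theorem rcSpace_orthogonal (d : ℕ) (hd : 1 ≤ d) :
    ((rcSpace d)ᗮ : Set (EuclideanSpace ℝ (Fin d × Fin d))) =
      { z | ∃ l : Fin d → ℝ, ∀ p : Fin d × Fin d, z p = l p.1 - l p.2 } ∧
    Module.finrank ℝ ((rcSpace d)ᗮ) = d - 1 := by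
  have hK : (rcSpace d)ᗮ = LinearMap.range (Lmap d) := by
    rw [rc_eq_orth, Submodule.orthogonal_orthogonal]
  constructor
  · rw [hK]
    ext z
    simp only [SetLike.mem_coe, LinearMap.mem_range, Set.mem_setOf_eq]
    constructor
    · rintro ⟨l, rfl⟩
      exact ⟨l, fun p => rfl⟩
    · rintro ⟨l, h⟩
      exact ⟨l, PiLp.ext fun p => (h p).symm⟩
  · have h1 : Module.finrank ℝ (LinearMap.ker (Lmap d)) = 1 := by
      rw [ker_Lmap d hd]
      refine finrank_span_singleton ?_
      intro h
      have := congrFun h ⟨0, hd⟩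
      norm_num at this
    have h2 := LinearMap.finrank_range_add_finrank_ker (Lmap d)
    rw [h1, Module.finrank_fin_fun] at h2
    rw [hK]
    omega
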